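/- For x in the open positive orthant, the limit as r → 0 of the gradient of ξ̃_r(x) equals (1/n) times the gradient of the geometric mean ξ_0 at x; componentwise, ∂ξ̃_r/∂x_j (x) → (1/n) ξ_0(x)/x_j as r → 0. -/

import Mathlib

open Filter Topology

/-- Componentwise convergence of the gradient of ξ̃_r to (1/n)·∇ξ₀ as r → 0. -/
theorem stmt1 {n : ℕ} (hn : 1 ≤ n) (x : Fin n → ℝ) (hx : ∀ i, 0 < x i) (j : Fin n) :
    Filter.Tendsto
      (fun r : ℝ => (1 / (n : ℝ) ^ (1 / r)) * (∑ i, x i ^ r) ^ (1 / r - 1) * x j ^ (r - 1))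
      (𝓝[≠] (0 : ℝ))
      (𝓝 ((1 / (n : ℝ)) * (∏ i, x i) ^ (1 / (n : ℝ)) / x j)) := by
  have hnpos : 0 < n := hn
  have hn0 : (0:ℝ) < (n:ℝ) := by exact_mod_cast hnpos
  have : Nonempty (Fin n) := Fin.pos_iff_nonempty.mp hnpos
  set S : ℝ → ℝ := fun r => ∑ i, x i ^ r with hSdef
  have hSpos : ∀ r, 0 < S r := fun r =>
    Finset.sum_pos (fun i _ => Real.rpow_pos_of_pos (hx i) r) Finset.univ_nonempty
  have hS0 : S 0 = n := by simp [hSdef]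
  -- derivative of S at 0
  have hS : HasDerivAt S (∑ i, Real.log (x i)) 0 := by
    have h := HasDerivAt.fun_sum (u := Finset.univ)
      (fun i _ => (Real.hasStrictDerivAt_const_rpow (hx i) 0).hasDerivAt)
    simpa using h
  -- derivative of log ∘ S at 0
  have hlogS : HasDerivAt (fun r => Real.log (S r)) ((∑ i, Real.log (x i)) / (n:ℝ)) 0 := by
    have := hS.log (ne_of_gt (hSpos 0))
    rwa [hS0] at this
  have hslope : Tendsto (fun r : ℝ => (Real.log (S r) - Real.log (n:ℝ)) / r)
      (𝓝[≠] (0:ℝ)) (𝓝 ((∑ i, Real.log (x i)) / (n:ℝ))) := by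
    have := hasDerivAt_iff_tendsto_slope.mp hlogS
    refine this.congr fun r => ?_
    simp [slope, hS0, div_eq_inv_mul]
  have hlogScont : Tendsto (fun r : ℝ => Real.log (S r)) (𝓝[≠] (0:ℝ)) (𝓝 (Real.log (n:ℝ))) := by
    have h := (hlogS.continuousAt.tendsto).mono_left (nhdsWithin_le_nhds (s := {(0:ℝ)}ᶜ))
    simpa [hS0] using h
  -- the exponent function
  set L : ℝ := (∑ i, Real.log (x i)) / (n:ℝ) - Real.log (n:ℝ) - Real.log (x j) with hL
  have hg : Tendsto (fun r : ℝ => (Real.log (S r) - Real.log (n:ℝ)) / r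
      - Real.log (S r) + (r - 1) * Real.log (x j)) (𝓝[≠] (0:ℝ)) (𝓝 L) := by
    have h3 : Tendsto (fun r : ℝ => (r - 1) * Real.log (x j)) (𝓝[≠] (0:ℝ))
        (𝓝 (-Real.log (x j))) := by
      have : Tendsto (fun r : ℝ => (r - 1) * Real.log (x j)) (𝓝 (0:ℝ))
          (𝓝 ((0 - 1) * Real.log (x j))) := by
        exact (tendsto_id.sub tendsto_const_nhds).mul tendsto_const_nhds
      simpa using this.mono_left nhdsWithin_le_nhds
    have := (hslope.sub hlogScont).add h3
    simpa [hL, sub_eq_add_neg] using this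
  have key : Tendsto (fun r : ℝ => Real.exp ((Real.log (S r) - Real.log (n:ℝ)) / r
      - Real.log (S r) + (r - 1) * Real.log (x j))) (𝓝[≠] (0:ℝ)) (𝓝 (Real.exp L)) :=
    (Real.continuous_exp.continuousAt.tendsto).comp hg
  have heq : ∀ᶠ r in 𝓝[≠] (0:ℝ),
      Real.exp ((Real.log (S r) - Real.log (n:ℝ)) / r - Real.log (S r)
        + (r - 1) * Real.log (x j))
      = (1 / (n : ℝ) ^ (1 / r)) * (∑ i, x i ^ r) ^ (1 / r - 1) * x j ^ (r - 1) := by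
    filter_upwards [self_mem_nhdsWithin] with r hr
    have hr0 : r ≠ 0 := hr
    rw [Real.rpow_def_of_pos hn0, Real.rpow_def_of_pos (hSpos r), Real.rpow_def_of_pos (hx j),
      one_div, ← Real.exp_neg, ← Real.exp_add, ← Real.exp_add]
    congr 1
    field_simp
    ring
  have hfin : Real.exp L = (1 / (n : ℝ)) * (∏ i, x i) ^ (1 / (n : ℝ)) / x j := by
    rw [hL]
    have hprod : (∏ i, x i) ^ (1 / (n:ℝ)) = Real.exp ((∑ i, Real.log (x i)) / (n:ℝ)) := by
      rw [Real.rpow_def_of_pos (Finset.prod_pos fun i _ => hx i),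
        Real.log_prod (fun i _ => ne_of_gt (hx i))]
      ring_nf
    rw [hprod, sub_eq_add_neg, sub_eq_add_neg, Real.exp_add, Real.exp_add, Real.exp_neg,
      Real.exp_neg, Real.exp_log hn0, Real.exp_log (hx j)]
    field_simp
  rw [← hfin]
  exact key.congr' heq
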